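/- Let r_n → ∞ be a space scale such that m_n/n → ε for some ε ∈ [0,1] (covering the short, intermediate and extreme cases). Then α_n → α(ε) as n → ∞, and for each fixed v > 0 one has h_n(v)·v^{α_n} → 1 as n → ∞; in particular h_n(v) = v^{-α_n}(1 + o(1)) for each fixed v > 0. -/

import Mathlib

open Filter MeasureTheory

/-- The standard Gaussian density `φ(x) = (2π)^{-1/2} e^{-x²/2}`. -/
noncomputable def phi (x : ℝ) : ℝ := (Real.sqrt (2 * Real.pi))⁻¹ * Real.exp (-x ^ 2 / 2)

/-- The standard Gaussian distribution function `Φ(x) = ∫_{-∞}^x φ(y) dy`. -/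
noncomputable def Phi (x : ℝ) : ℝ := ∫ y in Set.Iic x, phi y

set_option maxHeartbeats 1000000

section AuxGaussianTail
open Set

noncomputable def Tl (x : ℝ) : ℝ := ∫ y in Set.Ioi x, phi y

lemma phi_eq (x : ℝ) : phi x = (Real.sqrt (2 * Real.pi))⁻¹ * Real.exp (-(1/2) * x ^ 2) := by
  rw [phi, show -x ^ 2 / 2 = -(1/2) * x ^ 2 by ring]

lemma phi_pos (x : ℝ) : 0 < phi x := by
  have h : (0:ℝ) < 2 * Real.pi := by positivity
  exact mul_pos (inv_pos.2 (Real.sqrt_pos.2 h)) (Real.exp_pos _)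

lemma integrable_phi : Integrable phi := by
  have := (integrable_exp_neg_mul_sq (by norm_num : (0:ℝ) < 1/2)).const_mul
    (Real.sqrt (2 * Real.pi))⁻¹
  refine this.congr (Eventually.of_forall fun x => ?_)
  rw [phi_eq]

lemma integral_phi : ∫ x, phi x = 1 := by
  have h : ∫ x : ℝ, Real.exp (-(1/2) * x ^ 2) = Real.sqrt (Real.pi / (1/2)) :=
    integral_gaussian (1/2)
  have h2 : Real.pi / (1/2 : ℝ) = 2 * Real.pi := by ring
  have : ∫ x, phi x = (Real.sqrt (2 * Real.pi))⁻¹ * ∫ x : ℝ, Real.exp (-(1/2) * x ^ 2) := by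
    rw [← integral_const_mul]
    exact integral_congr_ae (Eventually.of_forall fun x => phi_eq x)
  rw [this, h, h2, inv_mul_cancel₀]
  positivity

lemma one_sub_Phi (x : ℝ) : 1 - Phi x = Tl x := by
  have := intervalIntegral.integral_Iic_add_Ioi (μ := volume) (f := phi) (b := x)
    integrable_phi.integrableOn integrable_phi.integrableOn
  rw [integral_phi] at this
  simp only [Phi, Tl]
  linarith

lemma Tl_pos (x : ℝ) : 0 < Tl x := by
  rw [Tl, setIntegral_pos_iff_support_of_nonneg_ae
    (Eventually.of_forall fun y => (phi_pos y).le) integrable_phi.integrableOn]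
  have : Function.support phi = Set.univ := by
    ext y; simp [Function.support, (phi_pos y).ne']
  rw [this, Set.univ_inter]
  simp [Real.volume_Ioi]

lemma Tl_antitone : Antitone Tl := by
  intro x y hxy
  exact setIntegral_mono_set integrable_phi.integrableOn
    (Eventually.of_forall fun y => (phi_pos y).le)
    (HasSubset.Subset.eventuallyLE (Set.Ioi_subset_Ioi hxy))

lemma hasDerivAt_phi (x : ℝ) : HasDerivAt phi (-x * phi x) x := by
  have h1 : HasDerivAt (fun x : ℝ => -x ^ 2 / 2) (-x) x := by
    have := ((hasDerivAt_pow 2 x).neg).div_const 2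
    norm_num at this
    exact this.congr_deriv (by ring)
  have h2 : HasDerivAt phi ((Real.sqrt (2 * Real.pi))⁻¹ * (Real.exp (-x ^ 2 / 2) * -x)) x :=
    (h1.exp).const_mul (Real.sqrt (2 * Real.pi))⁻¹
  convert h2 using 1
  simp only [phi]; ring

lemma tendsto_phi_atTop : Tendsto phi atTop (nhds 0) := by
  have h : Tendsto (fun x : ℝ => -x ^ 2 / 2) atTop atBot := by
    apply Tendsto.atBot_div_const (by norm_num)
    exact tendsto_neg_atBot_iff.2 (tendsto_pow_atTop (by norm_num))
  have := Real.tendsto_exp_atBot.comp h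
  have h3 := this.const_mul (Real.sqrt (2 * Real.pi))⁻¹
  rw [mul_zero] at h3
  exact h3.congr fun y => by simp [phi, Function.comp]

/-- FTC: ∫_{Ioi a} (phi t + phi t / t²) = phi a / a for a > 0. -/
lemma ftc_mill (a : ℝ) (ha : 0 < a) :
    (∫ t in Set.Ioi a, (phi t + phi t / t ^ 2)) = phi a / a ∧
      IntegrableOn (fun t => phi t + phi t / t ^ 2) (Set.Ioi a) := by
  have hderiv : ∀ t ∈ Set.Ici a, HasDerivAt (fun t => -(phi t / t)) (phi t + phi t / t ^ 2) t := by
    intro t ht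
    have htpos : 0 < t := lt_of_lt_of_le ha ht
    have h1 : HasDerivAt (fun t : ℝ => phi t / t)
        ((-t * phi t * t - phi t * 1) / t ^ 2) t := (hasDerivAt_phi t).div (hasDerivAt_id t) htpos.ne'
    have h2 := h1.neg
    refine h2.congr_deriv ?_
    have ht2 : t ^ 2 ≠ 0 := by positivity
    rw [add_div' _ _ _ ht2, neg_div']
    congr 1
    ring
  have hpos : ∀ t ∈ Set.Ioi a, 0 ≤ phi t + phi t / t ^ 2 := by
    intro t ht
    have := phi_pos t
    have : 0 < t := lt_trans ha ht
    positivity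
  have hlim : Tendsto (fun t => -(phi t / t)) atTop (nhds 0) := by
    have := (tendsto_phi_atTop.mul tendsto_inv_atTop_zero)
    simpa [div_eq_mul_inv] using this.neg
  constructor
  · have := integral_Ioi_of_hasDerivAt_of_nonneg' hderiv hpos hlim
    simpa using this
  · exact integrableOn_Ioi_deriv_of_nonneg' hderiv hpos hlim

lemma mill_upper {a : ℝ} (ha : 0 < a) : Tl a ≤ phi a / a := by
  obtain ⟨heq, hint⟩ := ftc_mill a ha
  rw [← heq, Tl]
  apply setIntegral_mono_on integrable_phi.integrableOn hint measurableSet_Ioi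
  intro t ht
  have htpos : 0 < t := lt_trans ha ht
  have := phi_pos t
  nlinarith [sq_nonneg t, phi_pos t, div_nonneg (phi_pos t).le (sq_nonneg t)]

lemma mill_lower {a : ℝ} (ha : 0 < a) : phi a / a ≤ (1 + a⁻¹ ^ 2) * Tl a := by
  obtain ⟨heq, hint⟩ := ftc_mill a ha
  have hsub : IntegrableOn (fun t => phi t / t ^ 2) (Set.Ioi a) := by
    have h0 : IntegrableOn (fun t => (phi t + phi t / t ^ 2) - phi t) (Set.Ioi a) :=
      hint.sub integrable_phi.integrableOn
    exact h0.congr_fun (fun t _ => by ring) measurableSet_Ioi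
  have hle : (∫ t in Set.Ioi a, phi t / t ^ 2) ≤ a⁻¹ ^ 2 * Tl a := by
    rw [Tl, ← integral_const_mul]
    apply setIntegral_mono_on hsub (integrable_phi.integrableOn.const_mul _) measurableSet_Ioi
    intro t ht
    have htpos : 0 < t := lt_trans ha ht
    rw [div_eq_mul_inv, mul_comm]
    have h2 : t⁻¹ ^ 2 ≤ a⁻¹ ^ 2 := by
      apply pow_le_pow_left₀ (by positivity)
      exact one_div t ▸ one_div a ▸ (one_div_le_one_div_of_le ha (le_of_lt ht))
    have := (phi_pos t).le
    calc (t ^ 2)⁻¹ * phi t = t⁻¹ ^ 2 * phi t := by rw [inv_pow]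
      _ ≤ a⁻¹ ^ 2 * phi t := by nlinarith [phi_pos t]
  have hsplit : phi a / a = Tl a + ∫ t in Set.Ioi a, phi t / t ^ 2 := by
    rw [← heq, Tl, ← integral_add integrable_phi.integrableOn hsub]
  nlinarith [Tl_pos a]

lemma log_phi (t : ℝ) : Real.log (phi t) = -(t ^ 2 / 2) - Real.log (Real.sqrt (2 * Real.pi)) := by
  have h2π : (0:ℝ) < Real.sqrt (2 * Real.pi) := Real.sqrt_pos.2 (by positivity)
  rw [phi, Real.log_mul (by positivity) (Real.exp_ne_zero _), Real.log_inv, Real.log_exp]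
  ring

lemma tendsto_sqrt_atTop : Tendsto (fun t : ℝ => Real.sqrt t) atTop atTop := by
  rw [tendsto_atTop]
  intro M
  filter_upwards [eventually_ge_atTop (M ^ 2)] with t ht
  calc M ≤ |M| := le_abs_self M
    _ = Real.sqrt (M ^ 2) := (Real.sqrt_sq_eq_abs M).symm
    _ ≤ Real.sqrt t := Real.sqrt_le_sqrt ht

end AuxGaussianTail

/-- Let `r_n → ∞` with `m_n/n → ε ∈ [0,1]`, where `b_n (1 - Φ(log r_n/(β√n))) = 1`,
`m_n = log b_n / log 2`, `b_n → ∞`, `B_n > 0` solves `b_n φ(B_n) = B_n`, and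
`α_n = B_n/(β√n)`.  Then `α_n → α(ε) = √(2ε log 2)/β` and, for each fixed `v > 0`,
`h_n(v) v^{α_n} → 1` where `h_n(v) = b_n (1 - Φ(log(r_n v)/(β√n)))`. -/
theorem hn_asymptotics (β : ℝ) (hβ : 0 < β) (ε : ℝ) (hε0 : 0 ≤ ε) (hε1 : ε ≤ 1)
    (r b B : ℕ → ℝ)
    (hr : Tendsto r atTop atTop)
    (hb_def : ∀ n : ℕ, b n * (1 - Phi (Real.log (r n) / (β * Real.sqrt n))) = 1)
    (hb : Tendsto b atTop atTop)
    (hB_pos : ∀ n, 0 < B n)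
    (hB : ∀ n, b n * phi (B n) = B n)
    (hm : Tendsto (fun n : ℕ => (Real.log (b n) / Real.log 2) / n) atTop (nhds ε)) :
    Tendsto (fun n : ℕ => B n / (β * Real.sqrt n)) atTop
      (nhds (Real.sqrt (2 * ε * Real.log 2) / β)) ∧
    ∀ v : ℝ, 0 < v →
      Tendsto (fun n : ℕ =>
          b n * (1 - Phi (Real.log (r n * v) / (β * Real.sqrt n)))
            * v ^ (B n / (β * Real.sqrt n)))
        atTop (nhds 1) := by
  set c : ℝ := Real.log (Real.sqrt (2 * Real.pi)) with hc
  set s : ℕ → ℝ := fun n => β * Real.sqrt n with hs_def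
  set x : ℕ → ℝ := fun n => Real.log (r n) / s n with hx_def
  have hs_top : Tendsto s atTop atTop := by
    have h1 : Tendsto (fun n : ℕ => Real.sqrt n) atTop atTop :=
      tendsto_sqrt_atTop.comp tendsto_natCast_atTop_atTop
    exact h1.const_mul_atTop hβ
  have hTb : ∀ n, b n * Tl (x n) = 1 := fun n => by
    rw [← one_sub_Phi]; exact hb_def n
  have hb_pos : ∀ n, 0 < b n := by
    intro n
    nlinarith [hTb n, Tl_pos (x n)]
  have hTx : ∀ n, Tl (x n) = (b n)⁻¹ := fun n =>
    (inv_eq_of_mul_eq_one_right (hTb n)).symm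
  have hx_top : Tendsto x atTop atTop := by
    rw [tendsto_atTop]
    intro M
    have h1 : ∀ᶠ n in atTop, (b n)⁻¹ < Tl M :=
      hb.inv_tendsto_atTop.eventually_lt_const (Tl_pos M)
    filter_upwards [h1] with n hn
    by_contra hcon
    push_neg at hcon
    have h2 : Tl M ≤ Tl (x n) := Tl_antitone hcon.le
    rw [hTx n] at h2
    linarith
  have hB_top : Tendsto B atTop atTop := by
    rw [tendsto_atTop]
    intro M
    set M' := max M 1 with hM'def
    have hM' : (0:ℝ) < M' := lt_of_lt_of_le one_pos (le_max_right _ _)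
    have h1 : ∀ᶠ n in atTop, M' / phi M' < b n := hb.eventually_gt_atTop _
    filter_upwards [h1] with n hn
    have hn' : M' < b n * phi M' := (div_lt_iff₀ (phi_pos M')).1 hn
    rcases le_or_gt (B n) M' with h | h
    · exfalso
      have hmono : phi M' ≤ phi (B n) := by
        rw [phi, phi]
        apply mul_le_mul_of_nonneg_left _ (by positivity)
        apply Real.exp_le_exp.2
        nlinarith [hB_pos n]
      nlinarith [hB n, hb_pos n, phi_pos M']
    · exact le_trans (le_max_left _ _) h.le
  have hphiB : ∀ n, phi (B n) = B n / b n := fun n => by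
    rw [eq_div_iff (hb_pos n).ne', mul_comm]; exact hB n
  have hlogb : ∀ n, Real.log (b n) = B n ^ 2 / 2 + c + Real.log (B n) := by
    intro n
    have h1 := log_phi (B n)
    rw [hphiB n, Real.log_div (hB_pos n).ne' (hb_pos n).ne'] at h1
    rw [← hc] at h1
    linarith
  set θ : ℕ → ℝ := fun n => Real.log (b n) - (x n ^ 2 / 2 + c + Real.log (x n)) with hθdef
  have hx1 : ∀ᶠ n in atTop, 1 ≤ x n := hx_top.eventually_ge_atTop 1
  have hθ_bounds : ∀ᶠ n in atTop, 0 ≤ θ n ∧ θ n ≤ Real.log (1 + (x n)⁻¹ ^ 2) := by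
    filter_upwards [hx1] with n hx1n
    have hx0 : (0:ℝ) < x n := lt_of_lt_of_le one_pos hx1n
    have hup := mill_upper hx0
    have hlow := mill_lower hx0
    rw [hTx n] at hup hlow
    have hbpos := hb_pos n
    have hφ := phi_pos (x n)
    constructor
    · have h2 : Real.log ((b n)⁻¹) ≤ Real.log (phi (x n) / x n) :=
        Real.log_le_log (by positivity) hup
      rw [Real.log_inv, Real.log_div hφ.ne' hx0.ne', log_phi, ← hc] at h2
      simp only [hθdef]
      linarith
    · have h3 : Real.log (phi (x n) / x n) ≤ Real.log ((1 + (x n)⁻¹ ^ 2) * (b n)⁻¹) :=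
        Real.log_le_log (by positivity) hlow
      rw [Real.log_div hφ.ne' hx0.ne', log_phi, ← hc,
        Real.log_mul (by positivity) (by positivity), Real.log_inv] at h3
      simp only [hθdef]
      linarith
  have hxinv : Tendsto (fun n => (x n)⁻¹) atTop (nhds 0) := hx_top.inv_tendsto_atTop
  have hx2 : Tendsto (fun n => 1 + (x n)⁻¹ ^ 2) atTop (nhds 1) := by
    have := (hxinv.pow 2).const_add 1
    norm_num at this
    exact this.congr fun k => by rw [inv_pow]
  have hlog1 : Tendsto (fun n => Real.log (1 + (x n)⁻¹ ^ 2)) atTop (nhds 0) := by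
    have := (Real.continuousAt_log one_ne_zero).tendsto.comp hx2
    simpa [Function.comp_def] using this
  have hθ0 : Tendsto θ atTop (nhds 0) :=
    tendsto_of_tendsto_of_tendsto_of_le_of_le' tendsto_const_nhds hlog1
      (hθ_bounds.mono fun n h => h.1) (hθ_bounds.mono fun n h => h.2)
  have hB1 : ∀ᶠ n in atTop, 1 ≤ B n := hB_top.eventually_ge_atTop 1
  have hBx_bounds : ∀ᶠ n in atTop, 0 ≤ B n - x n ∧ B n - x n ≤ θ n := by
    filter_upwards [hx1, hθ_bounds] with n hx1n hθn
    have hx0 : (0:ℝ) < x n := by linarith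
    have hB0 := hB_pos n
    have hθeq : θ n = B n ^ 2 / 2 + Real.log (B n) - (x n ^ 2 / 2 + Real.log (x n)) := by
      simp only [hθdef]; rw [hlogb n]; ring
    have hxB : x n ≤ B n := by
      by_contra hcon
      push_neg at hcon
      have hl : Real.log (B n) ≤ Real.log (x n) := Real.log_le_log hB0 hcon.le
      have hsq : B n ^ 2 < x n ^ 2 := by nlinarith
      have hθ1 := hθn.1
      rw [hθeq] at hθ1
      linarith
    refine ⟨by linarith, ?_⟩
    have hl2 : Real.log (x n) ≤ Real.log (B n) := Real.log_le_log hx0 hxB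
    have key : 0 ≤ B n ^ 2 / 2 - x n ^ 2 / 2 - (B n - x n) := by
      nlinarith [mul_nonneg (sub_nonneg.2 hxB) (by linarith : (0:ℝ) ≤ B n + x n - 2)]
    rw [hθeq]
    linarith
  have hdiff : Tendsto (fun n => B n - x n) atTop (nhds 0) :=
    tendsto_of_tendsto_of_tendsto_of_le_of_le' tendsto_const_nhds hθ0
      (hBx_bounds.mono fun n h => h.1) (hBx_bounds.mono fun n h => h.2)
  have hlog2 : Real.log 2 ≠ 0 := ne_of_gt (Real.log_pos one_lt_two)
  have hlogb_n : Tendsto (fun n : ℕ => Real.log (b n) / n) atTop (nhds (ε * Real.log 2)) := by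
    have h1 := hm.mul_const (Real.log 2)
    refine h1.congr fun n => ?_
    rcases eq_or_ne ((n:ℝ)) 0 with h | h
    · rw [h]; simp
    · field_simp
  set C : ℝ := 2 * ε * Real.log 2 + 2 + 2 * |c| with hCdef
  have hC0 : (0:ℝ) < C := by
    have h1 : (0:ℝ) ≤ ε * Real.log 2 := mul_nonneg hε0 (Real.log_nonneg one_le_two)
    have h2 := abs_nonneg c
    simp only [hCdef]
    nlinarith
  have hBC : ∀ᶠ n in atTop, B n ≤ Real.sqrt C * Real.sqrt n := by
    have h1 : ∀ᶠ n in atTop, Real.log (b n) / n ≤ ε * Real.log 2 + 1 :=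
      hlogb_n.eventually (eventually_le_nhds (by linarith))
    filter_upwards [h1, hB1, eventually_ge_atTop 1] with n h1n hB1n hn1
    have hn0 : (1:ℝ) ≤ (n:ℝ) := by exact_mod_cast hn1
    have hn0' : (0:ℝ) < (n:ℝ) := by linarith
    have hlogB0 : 0 ≤ Real.log (B n) := Real.log_nonneg hB1n
    have hb_le : Real.log (b n) ≤ (ε * Real.log 2 + 1) * n := by
      rw [div_le_iff₀ hn0'] at h1n
      linarith
    have hBsq : B n ^ 2 ≤ C * n := by
      have heq := hlogb n
      have habs : -c ≤ |c| := neg_le_abs c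
      simp only [hCdef]
      nlinarith [mul_nonneg (abs_nonneg c) (by linarith : (0:ℝ) ≤ (n:ℝ) - 1)]
    calc B n = Real.sqrt (B n ^ 2) := (Real.sqrt_sq (hB_pos n).le).symm
      _ ≤ Real.sqrt (C * n) := Real.sqrt_le_sqrt hBsq
      _ = Real.sqrt C * Real.sqrt n := Real.sqrt_mul hC0.le n
  have hlogB_n : Tendsto (fun n : ℕ => Real.log (B n) / n) atTop (nhds 0) := by
    have hub : Tendsto (fun n : ℕ => Real.sqrt C * (Real.sqrt n)⁻¹) atTop (nhds 0) := by
      have h2 := ((tendsto_sqrt_atTop.comp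
        (tendsto_natCast_atTop_atTop (R := ℝ))).inv_tendsto_atTop).const_mul (Real.sqrt C)
      rw [mul_zero] at h2
      exact h2
    apply tendsto_of_tendsto_of_tendsto_of_le_of_le' tendsto_const_nhds hub
    · filter_upwards [hB1] with n hB1n
      exact div_nonneg (Real.log_nonneg hB1n) (Nat.cast_nonneg n)
    · filter_upwards [hBC, hB1, eventually_ge_atTop 1] with n h1 h2 h3
      have hn1 : (1:ℝ) ≤ (n:ℝ) := by exact_mod_cast h3
      have hn0 : (0:ℝ) < (n:ℝ) := by linarith
      have hsn : 0 < Real.sqrt n := Real.sqrt_pos.2 hn0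
      have hlogle : Real.log (B n) ≤ B n := by
        have := Real.log_le_sub_one_of_pos (hB_pos n); linarith
      have hnn : (n:ℝ) = Real.sqrt n * Real.sqrt n := (Real.mul_self_sqrt hn0.le).symm
      calc Real.log (B n) / n ≤ B n / n := by gcongr
        _ ≤ Real.sqrt C * Real.sqrt n / n := by gcongr
        _ = Real.sqrt C * (Real.sqrt n)⁻¹ := by
            field_simp
            rw [Real.sq_sqrt hn0.le]
  have hBsq_n : Tendsto (fun n : ℕ => B n ^ 2 / n) atTop (nhds (2 * ε * Real.log 2)) := by
    have hid : ∀ n : ℕ, B n ^ 2 / n =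
        2 * (Real.log (b n) / n) - 2 * c * ((n:ℝ))⁻¹ - 2 * (Real.log (B n) / n) := by
      intro n
      rcases eq_or_ne ((n:ℝ)) 0 with h | h
      · simp [h]
      · have := hlogb n
        field_simp
        linarith
    have hc_n : Tendsto (fun n : ℕ => 2 * c * ((n:ℝ))⁻¹) atTop (nhds 0) := by
      have h2 := (tendsto_inv_atTop_zero.comp (tendsto_natCast_atTop_atTop (R := ℝ))).const_mul (2 * c)
      rw [mul_zero] at h2
      exact h2
    have h3 := ((hlogb_n.const_mul 2).sub hc_n).sub (hlogB_n.const_mul 2)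
    have h4 : 2 * (ε * Real.log 2) - 0 - 2 * 0 = 2 * ε * Real.log 2 := by ring
    rw [h4] at h3
    exact h3.congr fun n => (hid n).symm
  have part1 : Tendsto (fun n : ℕ => B n / (β * Real.sqrt n)) atTop
      (nhds (Real.sqrt (2 * ε * Real.log 2) / β)) := by
    have hcomp : Tendsto (fun n : ℕ => Real.sqrt (B n ^ 2 / n) / β) atTop
        (nhds (Real.sqrt (2 * ε * Real.log 2) / β)) :=
      ((Real.continuous_sqrt.tendsto _).comp hBsq_n).div_const β
    refine Tendsto.congr' ?_ hcomp
    filter_upwards [eventually_ge_atTop 1] with n hn1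
    have hn0 : (1:ℝ) ≤ (n:ℝ) := by exact_mod_cast hn1
    have hsn : 0 < Real.sqrt n := Real.sqrt_pos.2 (by linarith)
    rw [Real.sqrt_div (sq_nonneg (B n)), Real.sqrt_sq (hB_pos n).le, div_div,
      mul_comm (Real.sqrt (n:ℝ)) β]
  refine ⟨part1, ?_⟩
  intro v hv
  set δ : ℕ → ℝ := fun n => Real.log v / s n with hδdef
  set y : ℕ → ℝ := fun n => x n + δ n with hydef
  have hδ0 : Tendsto δ atTop (nhds 0) := by
    have h1 := hs_top.inv_tendsto_atTop.const_mul (Real.log v)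
    rw [mul_zero] at h1
    exact h1.congr fun n => (div_eq_mul_inv _ _).symm
  have hy_top : Tendsto y atTop atTop := by
    have h1 : ∀ᶠ n in atTop, -1 ≤ δ n :=
      hδ0.eventually (eventually_ge_nhds (by norm_num))
    apply tendsto_atTop_mono' atTop
      (h1.mono fun n hn => by simp only [hydef]; linarith :
        (fun n => x n + (-1)) ≤ᶠ[atTop] y)
    exact tendsto_atTop_add_const_right _ _ hx_top
  have hy1 : ∀ᶠ n in atTop, 1 ≤ y n := hy_top.eventually_ge_atTop 1
  set P : ℕ → ℝ := fun n => b n * Tl (y n) * Real.exp (B n * δ n) with hPdef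
  have hpr : ∀ n, phi (y n) = phi (x n) * Real.exp (-(x n * δ n) - δ n ^ 2 / 2) := by
    intro n
    simp only [phi, hydef]
    rw [mul_assoc, ← Real.exp_add]
    congr 1
    ring
  have hE : Tendsto (fun n => Real.exp ((B n - x n) * δ n - δ n ^ 2 / 2)) atTop (nhds 1) := by
    have harg : Tendsto (fun n => (B n - x n) * δ n - δ n ^ 2 / 2) atTop (nhds 0) := by
      have h1 := (hdiff.mul hδ0).sub ((hδ0.pow 2).div_const 2)
      norm_num at h1
      exact h1
    have h2 := Real.continuous_exp.continuousAt.tendsto.comp harg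
    simpa [Function.comp_def] using h2
  have hxy1 : Tendsto (fun n => x n / y n) atTop (nhds 1) := by
    have h1 : Tendsto (fun n => δ n * (y n)⁻¹) atTop (nhds 0) := by
      have := hδ0.mul hy_top.inv_tendsto_atTop
      simpa using this
    have h3 : Tendsto (fun n => 1 - δ n * (y n)⁻¹) atTop (nhds 1) := by
      have := h1.const_sub 1
      simpa using this
    refine Tendsto.congr' ?_ h3
    filter_upwards [hy1] with n hy1n
    have hy0 : (0:ℝ) < y n := by linarith
    have hx : x n = y n - δ n := by simp only [hydef]; ring
    rw [hx]
    field_simp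
  have hy2 : Tendsto (fun n => 1 + (y n)⁻¹ ^ 2) atTop (nhds 1) := by
    have := (hy_top.inv_tendsto_atTop.pow 2).const_add 1
    norm_num at this
    exact this.congr fun k => by rw [inv_pow]
  have hU : Tendsto (fun n => Real.exp ((B n - x n) * δ n - δ n ^ 2 / 2)
      * (x n / y n * (1 + (x n)⁻¹ ^ 2))) atTop (nhds 1) := by
    have := hE.mul (hxy1.mul hx2)
    norm_num at this
    exact this.congr fun k => by rw [inv_pow]
  have hL : Tendsto (fun n => Real.exp ((B n - x n) * δ n - δ n ^ 2 / 2)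
      * (x n / y n / (1 + (y n)⁻¹ ^ 2))) atTop (nhds 1) := by
    have := hE.mul (hxy1.div hy2 one_ne_zero)
    norm_num at this
    exact this.congr fun k => by rw [inv_pow]
  have hPbounds : ∀ᶠ n in atTop,
      (Real.exp ((B n - x n) * δ n - δ n ^ 2 / 2) * (x n / y n / (1 + (y n)⁻¹ ^ 2)) ≤ P n ∧
       P n ≤ Real.exp ((B n - x n) * δ n - δ n ^ 2 / 2) * (x n / y n * (1 + (x n)⁻¹ ^ 2))) := by
    filter_upwards [hx1, hy1] with n hx1n hy1n
    have hx0 : (0:ℝ) < x n := by linarith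
    have hy0 : (0:ℝ) < y n := by linarith
    have hφx := phi_pos (x n)
    have hφy := phi_pos (y n)
    have hTy := Tl_pos (y n)
    have hTxp := Tl_pos (x n)
    have he : (0:ℝ) < Real.exp (B n * δ n) := Real.exp_pos _
    have hw : (0:ℝ) < Real.exp (-(x n * δ n) - δ n ^ 2 / 2) := Real.exp_pos _
    have hsplit : Real.exp ((B n - x n) * δ n - δ n ^ 2 / 2)
        = Real.exp (B n * δ n) * Real.exp (-(x n * δ n) - δ n ^ 2 / 2) := by
      rw [← Real.exp_add]; congr 1; ring
    have hPn : P n = Tl (y n) * Real.exp (B n * δ n) / Tl (x n) := by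
      have hbn : b n = (Tl (x n))⁻¹ := by rw [hTx n, inv_inv]
      simp only [hPdef]
      rw [hbn, div_eq_mul_inv]
      ring
    have hmu_y := mill_upper hy0
    have hml_y := mill_lower hy0
    have hmu_x := mill_upper hx0
    have hml_x := mill_lower hx0
    have hpx2 : (0:ℝ) < 1 + (x n)⁻¹ ^ 2 := by positivity
    have hpy2 : (0:ℝ) < 1 + (y n)⁻¹ ^ 2 := by positivity
    have hdenx : phi (x n) / (x n * (1 + (x n)⁻¹ ^ 2)) ≤ Tl (x n) := by
      rw [div_le_iff₀ (by positivity)]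
      calc phi (x n) = phi (x n) / x n * x n := by field_simp
        _ ≤ (1 + (x n)⁻¹ ^ 2) * Tl (x n) * x n :=
            mul_le_mul_of_nonneg_right hml_x hx0.le
        _ = Tl (x n) * (x n * (1 + (x n)⁻¹ ^ 2)) := by ring
    have hnumy : phi (y n) / (y n * (1 + (y n)⁻¹ ^ 2)) ≤ Tl (y n) := by
      rw [div_le_iff₀ (by positivity)]
      calc phi (y n) = phi (y n) / y n * y n := by field_simp
        _ ≤ (1 + (y n)⁻¹ ^ 2) * Tl (y n) * y n :=
            mul_le_mul_of_nonneg_right hml_y hy0.le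
        _ = Tl (y n) * (y n * (1 + (y n)⁻¹ ^ 2)) := by ring
    constructor
    · rw [hPn]
      have hA : phi (y n) / (y n * (1 + (y n)⁻¹ ^ 2)) * Real.exp (B n * δ n)
          ≤ Tl (y n) * Real.exp (B n * δ n) :=
        mul_le_mul_of_nonneg_right hnumy he.le
      have heq : Real.exp ((B n - x n) * δ n - δ n ^ 2 / 2) * (x n / y n / (1 + (y n)⁻¹ ^ 2))
          = (phi (y n) / (y n * (1 + (y n)⁻¹ ^ 2)) * Real.exp (B n * δ n))
              / (phi (x n) / x n) := by
        rw [hpr n, hsplit]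
        field_simp
      rw [heq]
      exact div_le_div₀ (by positivity) hA hTxp hmu_x
    · rw [hPn]
      have hA : Tl (y n) * Real.exp (B n * δ n)
          ≤ phi (y n) / y n * Real.exp (B n * δ n) :=
        mul_le_mul_of_nonneg_right hmu_y he.le
      have heq : Real.exp ((B n - x n) * δ n - δ n ^ 2 / 2) * (x n / y n * (1 + (x n)⁻¹ ^ 2))
          = (phi (y n) / y n * Real.exp (B n * δ n))
              / (phi (x n) / (x n * (1 + (x n)⁻¹ ^ 2))) := by
        rw [hpr n, hsplit]
        field_simp
      rw [heq]
      exact div_le_div₀ (by positivity) hA (by positivity) hdenx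
  have hPlim : Tendsto P atTop (nhds 1) :=
    tendsto_of_tendsto_of_tendsto_of_le_of_le' hL hU
      (hPbounds.mono fun n h => h.1) (hPbounds.mono fun n h => h.2)
  refine Tendsto.congr' ?_ hPlim
  filter_upwards [hr.eventually_gt_atTop 0] with n hrn
  have harg : Real.log (r n * v) / (β * Real.sqrt n) = y n := by
    rw [Real.log_mul hrn.ne' hv.ne']
    simp only [hydef, hx_def, hδdef, hs_def]
    rw [add_div]
  have hBδ : Real.log v * (B n / (β * Real.sqrt n)) = B n * δ n := by
    simp only [hδdef, hs_def]
    ring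
  simp only [hPdef]
  rw [← harg, ← hBδ, ← Real.rpow_def_of_pos hv, one_sub_Phi]
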